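/- Let I ⊆ [n] and let X ∈ O_n^T satisfy Tr_I X = 0, where Tr_I denotes the partial trace over all qudits in I. Then ‖X‖_{W1} ≤ |I| · ((d² − 1)/d²) · ‖X‖₁. In particular, for any quantum states ρ, σ ∈ S_n whose marginals on the complement of I coincide (i.e., Tr_I ρ = Tr_I σ), one has ‖ρ − σ‖_{W1} ≤ |I| · ((d² − 1)/d²) · ‖ρ − σ‖₁. -/

import Mathlib

open scoped BigOperators
open scoped Classical
open scoped ComplexOrder

noncomputable section

namespace QW1

/-- Configurations of `n` qudits of local dimension `d`:
the index set of the canonical basis of `(ℂ^d)^{⊗ n}`. -/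
abbrev Cfg (d n : ℕ) : Type := Fin n → Fin d

/-- Linear operators on the Hilbert space of `n` qudits, represented as matrices
in the canonical basis. -/
abbrev Mat (d n : ℕ) : Type := Matrix (Cfg d n) (Cfg d n) ℂ

/-- The trace norm `‖A‖₁ = Tr √(Aᴴ A)`. -/
noncomputable def traceNorm {ι : Type} [Fintype ι] [DecidableEq ι] (A : Matrix ι ι ℂ) : ℝ :=
  (((Matrix.posSemidef_conjTranspose_mul_self A).1.eigenvectorUnitary : Matrix ι ι ℂ) *
    Matrix.diagonal (((↑) : ℝ → ℂ) ∘ (Real.sqrt ·) ∘ (Matrix.posSemidef_conjTranspose_mul_self A).1.eigenvalues) *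
    (star (Matrix.posSemidef_conjTranspose_mul_self A).1.eigenvectorUnitary : Matrix ι ι ℂ)).trace.re

/-- The operator norm `‖A‖_∞`. -/
noncomputable def opNorm {ι : Type} [Fintype ι] [DecidableEq ι] (A : Matrix ι ι ℂ) : ℝ :=
  ‖Matrix.toEuclideanCLM (𝕜 := ℂ) A‖

/-- Quantum states: positive semidefinite operators with unit trace. -/
def IsState {ι : Type} [Fintype ι] (ρ : Matrix ι ι ℂ) : Prop :=
  ρ.PosSemidef ∧ ρ.trace = 1

/-- Insert the value `s` at position `i` into a configuration `a` of the remaining qudits. -/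
def ins {d n : ℕ} (i : Fin n) (a : {j : Fin n // j ≠ i} → Fin d) (s : Fin d) : Cfg d n :=
  fun j => if h : j = i then s else a ⟨j, h⟩

/-- The partial trace over the `i`-th qudit. -/
noncomputable def ptrace {d n : ℕ} (i : Fin n) (X : Mat d n) :
    Matrix ({j : Fin n // j ≠ i} → Fin d) ({j : Fin n // j ≠ i} → Fin d) ℂ :=
  fun a b => ∑ s : Fin d, X (ins i a s) (ins i b s)

/-- The marginal of `ρ` on the `i`-th qudit (partial trace over all the other qudits). -/
noncomputable def marginal {d n : ℕ} (i : Fin n) (ρ : Mat d n) :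
    Matrix (Fin d) (Fin d) ℂ :=
  fun s t => ∑ a : ({j : Fin n // j ≠ i} → Fin d), ρ (ins i a s) (ins i a t)

/-- Combine a configuration `s` of the qudits in `I` with a configuration `a` of the rest. -/
def insSet {d n : ℕ} (I : Finset (Fin n)) (a : {j : Fin n // j ∉ I} → Fin d)
    (s : {j : Fin n // j ∈ I} → Fin d) : Cfg d n :=
  fun j => if h : j ∈ I then s ⟨j, h⟩ else a ⟨j, h⟩

/-- The partial trace over the qudits in `I`. -/
noncomputable def ptraceSet {d n : ℕ} (I : Finset (Fin n)) (X : Mat d n) :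
    Matrix ({j : Fin n // j ∉ I} → Fin d) ({j : Fin n // j ∉ I} → Fin d) ℂ :=
  fun a b => ∑ s : ({j : Fin n // j ∈ I} → Fin d), X (insSet I a s) (insSet I b s)

/-- The set of values `(1/2) ∑ i ‖X⁽ⁱ⁾‖₁` over all decompositions `X = ∑ i X⁽ⁱ⁾` with
`X⁽ⁱ⁾` self-adjoint and `Tr_i X⁽ⁱ⁾ = 0`. -/
def W1Set {d n : ℕ} (X : Mat d n) : Set ℝ :=
  { r | ∃ Y : Fin n → Mat d n, (∀ i, (Y i).IsHermitian) ∧ (∀ i, ptrace i (Y i) = 0) ∧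
      X = ∑ i, Y i ∧ r = (1 / 2) * ∑ i, traceNorm (Y i) }

/-- The quantum `W₁` norm. -/
noncomputable def W1 {d n : ℕ} (X : Mat d n) : ℝ := sInf (W1Set X)

/-- The quantum Lipschitz constant: the dual norm of the quantum `W₁` norm. -/
noncomputable def lipschitz {d n : ℕ} (H : Mat d n) : ℝ :=
  sSup { r | ∃ X : Mat d n, X.IsHermitian ∧ X.trace = 0 ∧ W1 X ≤ 1 ∧
    r = ((H * X).trace).re }

/-- Extension `Φ ⊗ id_R` of a map on matrices. -/
def extendMap {A B R : Type} [Fintype A] [Fintype B] [Fintype R]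
    (Φ : Matrix A A ℂ → Matrix B B ℂ) (M : Matrix (A × R) (A × R) ℂ) :
    Matrix (B × R) (B × R) ℂ :=
  fun p q => Φ (fun a a' => M (a, p.2) (a', q.2)) p.1 q.1

/-- Quantum channels: completely positive trace-preserving linear maps. -/
def IsCPTP {A B : Type} [Fintype A] [Fintype B]
    (Φ : Matrix A A ℂ →ₗ[ℂ] Matrix B B ℂ) : Prop :=
  (∀ (k : ℕ) (M : Matrix (A × Fin k) (A × Fin k) ℂ), M.PosSemidef →
    (extendMap (fun N => Φ N) M).PosSemidef) ∧
  ∀ M, (Φ M).trace = M.trace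

/-- Action `φ_i ⊗ id` of a single-qudit map `φ` on the `i`-th qudit of `n` qudits. -/
def applyAt {d n : ℕ} (i : Fin n) (φ : Matrix (Fin d) (Fin d) ℂ → Matrix (Fin d) (Fin d) ℂ)
    (X : Mat d n) : Mat d n :=
  fun a b => φ (fun s t => X (Function.update a i s) (Function.update b i t)) (a i) (b i)

/-- Action `φ_I ⊗ id` of a map `φ` on the qudits in `I`. -/
def applyOn {d n : ℕ} (I : Finset (Fin n))
    (φ : Matrix ({j : Fin n // j ∈ I} → Fin d) ({j : Fin n // j ∈ I} → Fin d) ℂ →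
         Matrix ({j : Fin n // j ∈ I} → Fin d) ({j : Fin n // j ∈ I} → Fin d) ℂ)
    (X : Mat d n) : Mat d n :=
  fun a b =>
    φ (fun s t => X (insSet I (fun j => a j) s) (insSet I (fun j => b j) t))
      (fun j => a j) (fun j => b j)

/-- The operator obtained from `X` by permuting the tensor factors according to `π`. -/
def permuteMat {d n : ℕ} (π : Equiv.Perm (Fin n)) (X : Mat d n) : Mat d n :=
  fun a b => X (a ∘ π) (b ∘ π)

/-- Tensor product of an operator on the first `m` qudits with one on the last `n` qudits. -/
def tensorMN {d m n : ℕ} (A : Mat d m) (B : Mat d n) : Mat d (m + n) :=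
  fun a b =>
    A (fun i => a (Fin.castAdd n i)) (fun i => b (Fin.castAdd n i)) *
    B (fun j => a (Fin.natAdd m j)) (fun j => b (Fin.natAdd m j))

/-- Partial trace of an operator on `m + n` qudits over the last `n` qudits. -/
noncomputable def ptraceLast {d m n : ℕ} (X : Mat d (m + n)) : Mat d m :=
  fun a b => ∑ k : Cfg d n, X (Fin.append a k) (Fin.append b k)

/-- Partial trace of an operator on `m + n` qudits over the first `m` qudits. -/
noncomputable def ptraceFirst {d m n : ℕ} (X : Mat d (m + n)) : Mat d n :=
  fun a b => ∑ k : Cfg d m, X (Fin.append k a) (Fin.append k b)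

/-- `n`-fold tensor product `σ₁ ⊗ ⋯ ⊗ σₙ` of single-qudit operators. -/
def tensorAll {d n : ℕ} (σs : Fin n → Matrix (Fin d) (Fin d) ℂ) : Mat d n :=
  fun a b => ∏ i, σs i (a i) (b i)

/-- `I_d^{(i)} ⊗ K`: the identity on the `i`-th qudit tensored with an operator `K`
on the remaining qudits. -/
def idTensorAt {d n : ℕ} (i : Fin n)
    (K : Matrix ({j : Fin n // j ≠ i} → Fin d) ({j : Fin n // j ≠ i} → Fin d) ℂ) :
    Mat d n :=
  fun a b => if a i = b i then K (fun j => a j) (fun j => b j) else 0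

/-- `K ⊗ identity`: an operator acting only on the qudits in `I`. -/
def embedOn {d n : ℕ} (I : Finset (Fin n))
    (K : Matrix ({j : Fin n // j ∈ I} → Fin d) ({j : Fin n // j ∈ I} → Fin d) ℂ) :
    Mat d n :=
  fun a b => if (∀ j, j ∉ I → a j = b j) then K (fun j => a j) (fun j => b j) else 0

/-- The `n`-th tensor power `φ^{⊗n}` of a single-qudit linear map `φ`. -/
noncomputable def tensorPowMap {d n : ℕ}
    (φ : Matrix (Fin d) (Fin d) ℂ → Matrix (Fin d) (Fin d) ℂ) (X : Mat d n) : Mat d n :=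
  fun a b => ∑ s : Cfg d n, ∑ t : Cfg d n,
    X s t * ∏ j, φ (Matrix.single (s j) (t j) 1) (a j) (b j)

/-- The `1 → 1` norm of a map on single-qudit operators. -/
noncomputable def norm1to1 {d : ℕ}
    (F : Matrix (Fin d) (Fin d) ℂ → Matrix (Fin d) (Fin d) ℂ) : ℝ :=
  sSup { r | ∃ ρ : Matrix (Fin d) (Fin d) ℂ, IsState ρ ∧ r = traceNorm (F ρ) }

/-- The diamond norm of a map on single-qudit operators. -/
noncomputable def diamondNorm {d : ℕ}
    (F : Matrix (Fin d) (Fin d) ℂ → Matrix (Fin d) (Fin d) ℂ) : ℝ :=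
  sSup { r | ∃ ρ : Matrix (Fin d × Fin d) (Fin d × Fin d) ℂ, IsState ρ ∧
    r = traceNorm (extendMap F ρ) }

/-- The contraction coefficient (`W₁ → W₁` norm) of a map on `n`-qudit operators. -/
noncomputable def W1toW1 {d n : ℕ} (Φ : Mat d n → Mat d n) : ℝ :=
  sSup { r | ∃ X : Mat d n, X.IsHermitian ∧ X.trace = 0 ∧ W1 X ≤ 1 ∧ r = W1 (Φ X) }

/-- The von Neumann entropy `S(ρ) = -Tr[ρ ln ρ]` (natural logarithm). -/
noncomputable def vnEntropy {ι : Type} [Fintype ι] [DecidableEq ι] (ρ : Matrix ι ι ℂ) : ℝ :=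
  if h : ρ.IsHermitian then -∑ i, h.eigenvalues i * Real.log (h.eigenvalues i) else 0

/-- The logarithm of a self-adjoint matrix, via the spectral decomposition. -/
noncomputable def matLog {ι : Type} [Fintype ι] [DecidableEq ι] (ρ : Matrix ι ι ℂ) :
    Matrix ι ι ℂ :=
  if h : ρ.IsHermitian then
    (h.eigenvectorUnitary : Matrix ι ι ℂ) *
      Matrix.diagonal (fun i => (Real.log (h.eigenvalues i) : ℂ)) *
      (star (h.eigenvectorUnitary : Matrix ι ι ℂ))
  else 0

/-- The quantum relative entropy `S(ρ‖σ) = Tr[ρ (ln ρ - ln σ)]`. -/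
noncomputable def relEntropy {ι : Type} [Fintype ι] [DecidableEq ι]
    (ρ σ : Matrix ι ι ℂ) : ℝ :=
  ((ρ * (matLog ρ - matLog σ)).trace).re

/-- The Hamming distance between two configurations. -/
def hamming {d n : ℕ} (x y : Cfg d n) : ℕ :=
  (Finset.univ.filter (fun i => x i ≠ y i)).card

/-- Probability distributions on a finite set. -/
def IsProb {α : Type} [Fintype α] (p : α → ℝ) : Prop :=
  (∀ x, 0 ≤ p x) ∧ ∑ x, p x = 1

/-- Couplings of two probability distributions. -/
def IsCoupling {α : Type} [Fintype α] (π : α × α → ℝ) (p q : α → ℝ) : Prop :=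
  IsProb π ∧ (∀ x, ∑ y, π (x, y) = p x) ∧ (∀ y, ∑ x, π (x, y) = q y)

/-- The classical Wasserstein distance of order 1 with respect to the Hamming distance. -/
noncomputable def classicalW1 {d n : ℕ} (p q : Cfg d n → ℝ) : ℝ :=
  sInf { c | ∃ π : Cfg d n × Cfg d n → ℝ, IsCoupling π p q ∧
    c = ∑ x : Cfg d n, ∑ y : Cfg d n, (hamming x y : ℝ) * π (x, y) }

/-- The Lipschitz constant of a function on `[d]^n` with respect to the Hamming distance. -/
noncomputable def classicalLip {d n : ℕ} (f : Cfg d n → ℝ) : ℝ :=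
  sSup { r | ∃ x y : Cfg d n, x ≠ y ∧ r = |f x - f y| / (hamming x y : ℝ) }


open Matrix

section Aux

variable {ι : Type} [Fintype ι] [DecidableEq ι]

variable {ι : Type} [Fintype ι] [DecidableEq ι]

def psdSqrt (A : Matrix ι ι ℂ) : Matrix ι ι ℂ :=
  ((Matrix.posSemidef_conjTranspose_mul_self A).1.eigenvectorUnitary : Matrix ι ι ℂ) *
    Matrix.diagonal (((↑) : ℝ → ℂ) ∘ (Real.sqrt ·) ∘ (Matrix.posSemidef_conjTranspose_mul_self A).1.eigenvalues) *
    (star (Matrix.posSemidef_conjTranspose_mul_self A).1.eigenvectorUnitary : Matrix ι ι ℂ)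

lemma traceNorm_eq_psdSqrt (A : Matrix ι ι ℂ) : traceNorm A = (psdSqrt A).trace.re := rfl

lemma psdSqrt_eq_cfc (A : Matrix ι ι ℂ) : psdSqrt A = cfc Real.sqrt (Aᴴ * A) := by
  rw [(Matrix.posSemidef_conjTranspose_mul_self A).1.cfc_eq, Matrix.IsHermitian.cfc,
    Unitary.conjStarAlgAut_apply]
  rfl

lemma psdSqrt_psd (A : Matrix ι ι ℂ) : (psdSqrt A).PosSemidef := by
  have hD : (Matrix.diagonal (((↑) : ℝ → ℂ) ∘ (Real.sqrt ·) ∘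
      (Matrix.posSemidef_conjTranspose_mul_self A).1.eigenvalues)).PosSemidef := by
    rw [Matrix.posSemidef_diagonal_iff]
    intro i
    simp only [Function.comp_apply]
    rw [Complex.zero_le_real]
    exact Real.sqrt_nonneg _
  simpa [Matrix.star_eq_conjTranspose, psdSqrt] using hD.mul_mul_conjTranspose_same
    ((Matrix.posSemidef_conjTranspose_mul_self A).1.eigenvectorUnitary : Matrix ι ι ℂ)

lemma cfc_sqrt_sq_of_psd {S : Matrix ι ι ℂ} (hS : S.PosSemidef) :
    cfc Real.sqrt (S ^ 2) = S := by
  have hSa : IsSelfAdjoint S := hS.1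
  rw [← cfc_comp_pow Real.sqrt 2 S]
  conv_rhs => rw [← cfc_id' ℝ S]
  apply cfc_congr
  intro x hx
  rw [hS.1.spectrum_real_eq_range_eigenvalues] at hx
  obtain ⟨i, rfl⟩ := hx
  exact Real.sqrt_sq (hS.eigenvalues_nonneg i)

lemma eq_psdSqrt_of_sq_eq {A S : Matrix ι ι ℂ} (hS : S.PosSemidef) (h : S ^ 2 = Aᴴ * A) :
    S = psdSqrt A := by
  rw [psdSqrt_eq_cfc, ← h, cfc_sqrt_sq_of_psd hS]

lemma psdSqrt_mul_self (A : Matrix ι ι ℂ) : psdSqrt A * psdSqrt A = Aᴴ * A := by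
  have hH : IsSelfAdjoint (Aᴴ * A) := (Matrix.posSemidef_conjTranspose_mul_self A).1
  rw [psdSqrt_eq_cfc, ← cfc_mul Real.sqrt Real.sqrt (Aᴴ * A)]
  conv_rhs => rw [← cfc_id' ℝ (Aᴴ * A)]
  apply cfc_congr
  intro x hx
  rw [(Matrix.posSemidef_conjTranspose_mul_self A).1.spectrum_real_eq_range_eigenvalues] at hx
  obtain ⟨i, rfl⟩ := hx
  exact Real.mul_self_sqrt ((Matrix.posSemidef_conjTranspose_mul_self A).eigenvalues_nonneg i)

lemma trace_re_nonneg {M : Matrix ι ι ℂ} (hM : M.PosSemidef) : 0 ≤ M.trace.re := by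
  rw [Matrix.trace]
  have : ∀ i, 0 ≤ (M i i).re := by
    intro i
    have h := hM.re_dotProduct_nonneg (Pi.single i 1)
    simpa [dotProduct, Matrix.mulVec, Pi.single_apply] using h
  calc (0:ℝ) = ∑ i : ι, 0 := by simp
  _ ≤ _ := by
    rw [Complex.re_sum]
    exact Finset.sum_le_sum fun i _ => this i
  
lemma traceNorm_nonneg (A : Matrix ι ι ℂ) : 0 ≤ traceNorm A :=
  trace_re_nonneg (psdSqrt_psd A)

lemma traceNorm_zero : traceNorm (0 : Matrix ι ι ℂ) = 0 := by
  have h0 : Matrix.PosSemidef (0 : Matrix ι ι ℂ) := Matrix.PosSemidef.zero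
  have : (0 : Matrix ι ι ℂ) = psdSqrt (0:Matrix ι ι ℂ) := by
    apply eq_psdSqrt_of_sq_eq h0
    simp
  rw [traceNorm_eq_psdSqrt, ← this]
  simp

variable {ι : Type} [Fintype ι] [DecidableEq ι]

lemma traceNorm_unitary_conj (A : Matrix ι ι ℂ) {U : Matrix ι ι ℂ}
    (hU : U ∈ Matrix.unitaryGroup ι ℂ) :
    traceNorm (U * A * star U) = traceNorm A := by
  have hUU' : star U * U = 1 := Matrix.mem_unitaryGroup_iff'.mp hU
  set S := psdSqrt A with hSdef
  have hS : S.PosSemidef := psdSqrt_psd A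
  have h1 : (U * S * star U).PosSemidef := by
    simpa [Matrix.star_eq_conjTranspose] using hS.mul_mul_conjTranspose_same U
  have hsq : (U * S * star U) ^ 2 = (U * A * star U)ᴴ * (U * A * star U) := by
    have hSS : S * S = Aᴴ * A := psdSqrt_mul_self A
    have hrhs : (U * A * star U)ᴴ * (U * A * star U) = U * Aᴴ * (star U * U) * (A * star U) := by
      simp only [Matrix.conjTranspose_mul, Matrix.star_eq_conjTranspose,
        Matrix.conjTranspose_conjTranspose]
      noncomm_ring
    rw [hrhs, hUU']
    calc (U * S * star U) ^ 2 = U * S * (star U * U) * (S * star U) := by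
          rw [pow_two]; noncomm_ring
      _ = U * (S * S) * star U := by rw [hUU']; noncomm_ring
      _ = U * (Aᴴ * A) * star U := by rw [hSS]
      _ = U * Aᴴ * 1 * (A * star U) := by noncomm_ring
  have heq : U * S * star U = psdSqrt (U * A * star U) :=
    eq_psdSqrt_of_sq_eq h1 hsq
  rw [traceNorm_eq_psdSqrt, traceNorm_eq_psdSqrt, ← heq]
  rw [Matrix.trace_mul_cycle, hUU', Matrix.one_mul]

lemma traceNorm_real_smul (r : ℝ) (hr : 0 ≤ r) (A : Matrix ι ι ℂ) :
    traceNorm ((r : ℂ) • A) = r * traceNorm A := by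
  set S := psdSqrt A with hSdef
  have hS : S.PosSemidef := psdSqrt_psd A
  have h1 : ((r : ℂ) • S).PosSemidef := by
    have h0 : (0:ℂ) ≤ (r:ℂ) := by
      rw [Complex.zero_le_real]; exact hr
    exact hS.smul h0
  have hsq : ((r:ℂ) • S) ^ 2 = ((r:ℂ) • A)ᴴ * ((r:ℂ) • A) := by
    have hSS : S * S = Aᴴ * A := psdSqrt_mul_self A
    rw [pow_two, Matrix.conjTranspose_smul, Matrix.smul_mul, Matrix.mul_smul,
      Matrix.smul_mul, Matrix.mul_smul, hSS, smul_smul, smul_smul]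
    congr 1
    simp [Complex.conj_ofReal]
  have heq : (r:ℂ) • S = psdSqrt ((r:ℂ) • A) :=
    eq_psdSqrt_of_sq_eq h1 hsq
  rw [traceNorm_eq_psdSqrt, traceNorm_eq_psdSqrt, ← heq, Matrix.trace_smul]
  simp [smul_eq_mul, hSdef]

lemma traceNorm_eq_sum_abs_eigenvalues {A : Matrix ι ι ℂ} (hA : A.IsHermitian) :
    traceNorm A = ∑ i, |hA.eigenvalues i| := by
  set U : Matrix ι ι ℂ := (hA.eigenvectorUnitary : Matrix ι ι ℂ) with hUdef
  have hU : U ∈ Matrix.unitaryGroup ι ℂ := hA.eigenvectorUnitary.2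
  have hUU' : star U * U = 1 := Matrix.mem_unitaryGroup_iff'.mp hU
  set D : Matrix ι ι ℂ := Matrix.diagonal (fun i => ((|hA.eigenvalues i| : ℝ) : ℂ)) with hDdef
  have hDD : D * D = Matrix.diagonal (RCLike.ofReal ∘ hA.eigenvalues) *
      Matrix.diagonal (RCLike.ofReal ∘ hA.eigenvalues) := by
    rw [hDdef, Matrix.diagonal_mul_diagonal, Matrix.diagonal_mul_diagonal]
    refine congrArg Matrix.diagonal (funext fun i => ?_)
    show ((|hA.eigenvalues i| : ℝ) : ℂ) * ((|hA.eigenvalues i| : ℝ) : ℂ) =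
      ((hA.eigenvalues i : ℝ) : ℂ) * ((hA.eigenvalues i : ℝ) : ℂ)
    rw [← Complex.ofReal_mul, ← Complex.ofReal_mul, abs_mul_abs_self]
  set S : Matrix ι ι ℂ := U * D * star U with hSdef
  have hdiagpsd : D.PosSemidef := by
    rw [hDdef, Matrix.posSemidef_diagonal_iff]
    intro i
    rw [Complex.zero_le_real]
    exact abs_nonneg _
  have h1 : S.PosSemidef := by
    simpa [hSdef, Matrix.star_eq_conjTranspose] using hdiagpsd.mul_mul_conjTranspose_same U
  have hsq : S ^ 2 = Aᴴ * A := by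
    have hspec : A = U * Matrix.diagonal (RCLike.ofReal ∘ hA.eigenvalues) * star U :=
      hA.spectral_theorem
    rw [hA.eq]
    conv_rhs => rw [hspec]
    calc S ^ 2 = U * (D * (star U * U) * D) * star U := by
          rw [pow_two, hSdef]; noncomm_ring
      _ = U * (D * D) * star U := by rw [hUU']; noncomm_ring
      _ = U * (Matrix.diagonal (RCLike.ofReal ∘ hA.eigenvalues) * (star U * U) *
            Matrix.diagonal (RCLike.ofReal ∘ hA.eigenvalues)) * star U := by
          rw [hDD, hUU']; noncomm_ring
      _ = _ := by noncomm_ring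
  have heq : S = psdSqrt A :=
    eq_psdSqrt_of_sq_eq h1 hsq
  rw [traceNorm_eq_psdSqrt, ← heq, hSdef, Matrix.trace_mul_cycle, hUU', Matrix.one_mul, hDdef,
    Matrix.trace_diagonal, Complex.re_sum]
  simp

variable {ι : Type} [Fintype ι] [DecidableEq ι]

lemma traceNorm_congr_sq {A B : Matrix ι ι ℂ} (h : Aᴴ * A = Bᴴ * B) :
    traceNorm A = traceNorm B := by
  have heq : psdSqrt B =
      psdSqrt A := by
    apply eq_psdSqrt_of_sq_eq (psdSqrt_psd B)
    rw [pow_two, psdSqrt_mul_self B, h]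
  rw [traceNorm_eq_psdSqrt, traceNorm_eq_psdSqrt, heq]

lemma traceNorm_neg (A : Matrix ι ι ℂ) : traceNorm (-A) = traceNorm A :=
  traceNorm_congr_sq (by simp)

lemma sum_abs_diag_conj_le {A : Matrix ι ι ℂ} (hA : A.IsHermitian)
    {V : Matrix ι ι ℂ} (hV : V ∈ Matrix.unitaryGroup ι ℂ) :
    ∑ i, ‖(star V * A * V) i i‖ ≤ traceNorm A := by
  rw [traceNorm_eq_sum_abs_eigenvalues hA]
  set W : Matrix ι ι ℂ := (hA.eigenvectorUnitary : Matrix ι ι ℂ) with hWdef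
  have hW : W ∈ Matrix.unitaryGroup ι ℂ := hA.eigenvectorUnitary.2
  set N : Matrix ι ι ℂ := star W * V with hNdef
  have hN : N ∈ Matrix.unitaryGroup ι ℂ := mul_mem (Unitary.star_mem hW) hV
  have hNN : N * star N = 1 := Matrix.mem_unitaryGroup_iff.mp hN
  have hform : star V * A * V =
      star N * Matrix.diagonal (RCLike.ofReal ∘ hA.eigenvalues) * N := by
    conv_lhs => rw [hA.spectral_theorem]
    rw [hNdef]
    simp only [Unitary.conjStarAlgAut_apply, Matrix.star_eq_conjTranspose, Matrix.conjTranspose_mul,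
      Matrix.conjTranspose_conjTranspose]
    noncomm_ring
  have hentry : ∀ i, (star V * A * V) i i =
      ∑ k, ((hA.eigenvalues k : ℝ) : ℂ) * (Complex.normSq (N k i) : ℂ) := by
    intro i
    rw [hform, Matrix.mul_apply]
    apply Finset.sum_congr rfl
    intro k _
    rw [Matrix.mul_diagonal, Matrix.star_eq_conjTranspose, Matrix.conjTranspose_apply,
      Complex.normSq_eq_conj_mul_self]
    simp only [Function.comp_apply]
    show (starRingEnd ℂ) (N k i) * ((hA.eigenvalues k : ℝ) : ℂ) * N k i = _
    ring
  have hrow : ∀ k, ∑ i, Complex.normSq (N k i) = 1 := by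
    intro k
    have h1 : (N * star N) k k = 1 := by rw [hNN]; simp
    rw [Matrix.mul_apply] at h1
    have h2 : ∀ i, N k i * (star N) i k = (Complex.normSq (N k i) : ℂ) := by
      intro i
      rw [Matrix.star_eq_conjTranspose, Matrix.conjTranspose_apply,
        Complex.normSq_eq_conj_mul_self]
      show N k i * star (N k i) = _
      rw [RCLike.star_def]
      ring
    rw [Finset.sum_congr rfl (fun i _ => h2 i)] at h1
    have := h1
    rw [← Complex.ofReal_sum] at this
    exact_mod_cast this
  calc ∑ i, ‖(star V * A * V) i i‖
      ≤ ∑ i, ∑ k, |hA.eigenvalues k| * Complex.normSq (N k i) := by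
        apply Finset.sum_le_sum
        intro i _
        rw [hentry i]
        refine le_trans (norm_sum_le _ _) ?_
        apply le_of_eq
        apply Finset.sum_congr rfl
        intro k _
        rw [norm_mul, Complex.norm_real, Complex.norm_real, Real.norm_eq_abs, Real.norm_eq_abs,
          abs_of_nonneg (Complex.normSq_nonneg _)]
    _ = ∑ k, |hA.eigenvalues k| * ∑ i, Complex.normSq (N k i) := by
        rw [Finset.sum_comm]
        simp [Finset.mul_sum]
    _ = ∑ k, |hA.eigenvalues k| := by
        apply Finset.sum_congr rfl
        intro k _
        rw [hrow k, mul_one]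

lemma traceNorm_add_le {A B : Matrix ι ι ℂ} (hA : A.IsHermitian) (hB : B.IsHermitian) :
    traceNorm (A + B) ≤ traceNorm A + traceNorm B := by
  have hC : (A + B).IsHermitian := hA.add hB
  set V : Matrix ι ι ℂ := (hC.eigenvectorUnitary : Matrix ι ι ℂ) with hVdef
  have hV : V ∈ Matrix.unitaryGroup ι ℂ := hC.eigenvectorUnitary.2
  have hdiag : star V * (A + B) * V = Matrix.diagonal (RCLike.ofReal ∘ hC.eigenvalues) :=
    by have := hC.conjStarAlgAut_star_eigenvectorUnitary; rwa [Unitary.conjStarAlgAut_star_apply] at this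
  have h1 : traceNorm (A + B) = ∑ i, ‖(star V * (A + B) * V) i i‖ := by
    rw [traceNorm_eq_sum_abs_eigenvalues hC, hdiag]
    apply Finset.sum_congr rfl
    intro i _
    rw [Matrix.diagonal_apply_eq]
    simp [Complex.norm_real]
  have hsplit : ∀ i, (star V * (A + B) * V) i i =
      (star V * A * V) i i + (star V * B * V) i i := by
    intro i
    rw [Matrix.mul_add, Matrix.add_mul]
    rfl
  calc traceNorm (A + B) = ∑ i, ‖(star V * (A + B) * V) i i‖ := h1
    _ ≤ ∑ i, (‖(star V * A * V) i i‖ + ‖(star V * B * V) i i‖) := by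
        apply Finset.sum_le_sum
        intro i _
        rw [hsplit i]
        exact norm_add_le _ _
    _ = (∑ i, ‖(star V * A * V) i i‖) +
        (∑ i, ‖(star V * B * V) i i‖) := Finset.sum_add_distrib
    _ ≤ traceNorm A + traceNorm B :=
        add_le_add (sum_abs_diag_conj_le hA hV) (sum_abs_diag_conj_le hB hV)

lemma isHermitian_sum {α : Type} (s : Finset α) (f : α → Matrix ι ι ℂ)
    (hf : ∀ a ∈ s, (f a).IsHermitian) : (∑ a ∈ s, f a).IsHermitian := by
  classical
  induction s using Finset.induction_on with
  | empty => simp [Matrix.isHermitian_zero]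
  | insert a s' hx ih =>
    rw [Finset.sum_insert hx]
    exact (hf a (Finset.mem_insert_self _ _)).add
      (ih fun b hb => hf b (Finset.mem_insert_of_mem hb))

lemma traceNorm_sum_le {α : Type} (s : Finset α) (f : α → Matrix ι ι ℂ)
    (hf : ∀ a ∈ s, (f a).IsHermitian) :
    traceNorm (∑ a ∈ s, f a) ≤ ∑ a ∈ s, traceNorm (f a) := by
  classical
  induction s using Finset.induction_on with
  | empty => simp [traceNorm_zero]
  | insert a s' hx ih =>
    rw [Finset.sum_insert hx, Finset.sum_insert hx]
    calc traceNorm (f a + ∑ b ∈ s', f b)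
        ≤ traceNorm (f a) + traceNorm (∑ b ∈ s', f b) :=
          traceNorm_add_le (hf a (Finset.mem_insert_self _ _))
            (isHermitian_sum s' f fun b hb => hf b (Finset.mem_insert_of_mem hb))
      _ ≤ _ := by
          gcongr
          exact ih fun b hb => hf b (Finset.mem_insert_of_mem hb)

lemma traceNorm_sub_le {A B : Matrix ι ι ℂ} (hA : A.IsHermitian) (hB : B.IsHermitian) :
    traceNorm (A - B) ≤ traceNorm A + traceNorm B := by
  rw [sub_eq_add_neg]
  calc traceNorm (A + -B) ≤ traceNorm A + traceNorm (-B) :=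
      traceNorm_add_le hA hB.neg
    _ = traceNorm A + traceNorm B := by rw [traceNorm_neg]

def om (d : ℕ) : ℂ := Complex.exp (2 * Real.pi * Complex.I / d)

variable {d : ℕ} [NeZero d]

lemma d_ne_zero : (d : ℂ) ≠ 0 := Nat.cast_ne_zero.mpr (NeZero.ne d)

lemma om_ne_zero : om d ≠ 0 := Complex.exp_ne_zero _

lemma om_pow_d : om d ^ d = 1 := by
  rw [om, ← Complex.exp_nat_mul]
  have h : (d:ℂ) * (2 * Real.pi * Complex.I / d) = 2 * Real.pi * Complex.I := by
    rw [mul_div_assoc']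
    exact mul_div_cancel_left₀ _ (d_ne_zero (d := d))
  rw [h]
  exact Complex.exp_two_pi_mul_I

lemma om_pow_mod (k : ℕ) : om d ^ (k % d) = om d ^ k := by
  conv_rhs => rw [← Nat.div_add_mod k d]
  rw [pow_add, pow_mul, om_pow_d, one_pow, one_mul]

lemma om_pow_eq_one_iff {k : ℕ} (hk : k < d) (h : om d ^ k = 1) : k = 0 := by
  rw [om, ← Complex.exp_nat_mul, Complex.exp_eq_one_iff] at h
  obtain ⟨m, hm⟩ := h
  have hpi : (2 * (Real.pi : ℂ) * Complex.I) ≠ 0 := by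
    simp [Real.pi_ne_zero, Complex.I_ne_zero, Complex.ofReal_ne_zero]
  have hd : (d : ℂ) ≠ 0 := d_ne_zero
  have h3 : (k : ℂ) * (2 * (Real.pi:ℂ) * Complex.I) / d = (m:ℂ) * (2 * (Real.pi:ℂ) * Complex.I) := by
    rw [mul_div_assoc]; exact hm
  have h4 := (div_eq_iff (d_ne_zero (d := d))).mp h3
  have hkc : (k : ℂ) = (m:ℂ) * d := by
    apply mul_right_cancel₀ hpi
    rw [h4]; ring
  have hki : (k : ℤ) = m * d := by exact_mod_cast hkc
  have hdvd : (d : ℤ) ∣ (k : ℤ) := ⟨m, by rw [hki]; ring⟩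
  have hdk : d ∣ k := Int.ofNat_dvd.mp (by exact_mod_cast hdvd)
  rcases hdk with ⟨c, hc⟩
  rcases Nat.eq_zero_or_pos c with h0 | h0
  · subst h0; simpa using hc
  · have : d ≤ k := by
      calc d = d * 1 := by ring
      _ ≤ d * c := Nat.mul_le_mul_left d h0
      _ = k := hc.symm
    omega


def chi (d : ℕ) (x : Fin d) : ℂ := om d ^ (x : ℕ)

lemma chi_zero : chi d 0 = 1 := by rw [chi, Fin.val_zero, pow_zero]

lemma chi_add (x y : Fin d) : chi d (x + y) = chi d x * chi d y := by
  rw [chi, Fin.val_add, om_pow_mod, pow_add]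
  rfl

lemma chi_mul_neg (x : Fin d) : chi d x * chi d (-x) = 1 := by
  rw [← chi_add, add_neg_cancel, chi_zero]

lemma star_om : star (om d) = (om d)⁻¹ := by
  rw [om, show (star (Complex.exp (2 * Real.pi * Complex.I / d))) =
    (starRingEnd ℂ) (Complex.exp (2 * Real.pi * Complex.I / d)) from rfl, ← Complex.exp_conj]
  · rw [← Complex.exp_neg]
    congr 1
    have : ((2 * Real.pi * Complex.I / d : ℂ)) = ((2 * Real.pi / d : ℝ) : ℂ) * Complex.I := by
      push_cast
      field_simp
    rw [this, _root_.map_mul, Complex.conj_I, Complex.conj_ofReal]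
    ring

lemma star_chi (x : Fin d) : star (chi d x) = chi d (-x) := by
  have h1 : star (chi d x) = (chi d x)⁻¹ := by
    rw [chi, star_pow, star_om, inv_pow]
  rw [h1]
  exact inv_eq_of_mul_eq_one_right (chi_mul_neg x)

lemma sum_chi (c : Fin d) : ∑ q : Fin d, chi d (q * c) = if c = 0 then (d : ℂ) else 0 := by
  have hterm : ∀ q : Fin d, chi d (q * c) = (om d ^ (c : ℕ)) ^ (q : ℕ) := by
    intro q
    rw [chi, Fin.val_mul, om_pow_mod, pow_mul']
  rw [Finset.sum_congr rfl (fun q _ => hterm q)]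
  rw [Fin.sum_univ_eq_sum_range (fun j => (om d ^ (c : ℕ)) ^ j) d]
  by_cases hc : c = 0
  · subst hc
    simp
  · rw [if_neg hc]
    set x : ℂ := om d ^ (c : ℕ) with hx
    have hx1 : x ≠ 1 := by
      intro h
      have := om_pow_eq_one_iff c.isLt h
      exact hc (Fin.ext (by simpa using this))
    have hxd : x ^ d = 1 := by
      rw [hx, ← pow_mul, mul_comm, pow_mul, om_pow_d, one_pow]
    have hgeom := geom_sum_mul x d
    rw [hxd, sub_self] at hgeom
    rcases mul_eq_zero.mp hgeom with h | h
    · exact h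
    · exact absurd (sub_eq_zero.mp h) hx1

variable {d n : ℕ} [NeZero d]

/-- Weyl (shift–multiply) unitary acting on the `i`-th qudit. -/
def weyl (i : Fin n) (p q : Fin d) : Mat d n :=
  fun a b => if a = Function.update b i (b i + p) then chi d (q * b i) else 0

lemma weyl_apply' (i : Fin n) (p q : Fin d) (a c : Cfg d n) :
    weyl i p q a c =
      if c = Function.update a i (a i - p) then chi d (q * (a i - p)) else 0 := by
  unfold weyl
  by_cases h : c = Function.update a i (a i - p)
  · rw [if_pos h, if_pos, h, Function.update_self]
    subst h
    funext j
    by_cases hj : j = i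
    · subst hj
      simp [Function.update_self, sub_add_cancel]
    · simp [Function.update_of_ne hj]
  · rw [if_neg h, if_neg]
    intro hcon
    apply h
    subst hcon
    funext j
    by_cases hj : j = i
    · subst hj
      simp [Function.update_self, add_sub_cancel_right]
    · simp [Function.update_of_ne hj]

lemma star_weyl_apply (i : Fin n) (p q : Fin d) (c b : Cfg d n) :
    (star (weyl i p q)) c b =
      if c = Function.update b i (b i - p) then star (chi d (q * (b i - p))) else 0 := by
  rw [Matrix.star_eq_conjTranspose, Matrix.conjTranspose_apply, weyl_apply']
  split_ifs <;> simp

lemma weyl_unitary (i : Fin n) (p q : Fin d) :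
    weyl i p q ∈ Matrix.unitaryGroup (Cfg d n) ℂ := by
  rw [Matrix.mem_unitaryGroup_iff]
  funext a b
  rw [Matrix.mul_apply]
  simp_rw [weyl_apply' i p q a, star_weyl_apply i p q _ b, ite_mul, zero_mul,
    Finset.sum_ite_eq' Finset.univ, Finset.mem_univ, if_true]
  have hchi : chi d (q * (a i - p)) * star (chi d (q * (a i - p))) = 1 := by
    rw [star_chi]
    exact chi_mul_neg _
  by_cases hab : a = b
  · subst hab
    rw [if_pos rfl, hchi, Matrix.one_apply_eq]
  · have hAB : Function.update a i (a i - p) ≠ Function.update b i (b i - p) := by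
      intro hcon
      apply hab
      funext j
      by_cases hj : j = i
      · subst hj
        have := congrFun hcon j
        simp only [Function.update_self] at this
        exact sub_left_injective this
      · have := congrFun hcon j
        simpa [Function.update_of_ne hj] using this
    rw [if_neg hAB, mul_zero, Matrix.one_apply_ne hab]

lemma weyl_conj_apply (i : Fin n) (p q : Fin d) (X : Mat d n) (a b : Cfg d n) :
    (weyl i p q * X * star (weyl i p q)) a b =
      chi d (q * (a i - p)) * star (chi d (q * (b i - p))) *
        X (Function.update a i (a i - p)) (Function.update b i (b i - p)) := by
  rw [Matrix.mul_assoc, Matrix.mul_apply]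
  simp_rw [weyl_apply' i p q a, ite_mul, zero_mul, Finset.sum_ite_eq' Finset.univ,
    Finset.mem_univ, if_true]
  rw [Matrix.mul_apply]
  simp_rw [star_weyl_apply i p q _ b, mul_ite, mul_zero, Finset.sum_ite_eq' Finset.univ,
    Finset.mem_univ, if_true]
  ring

lemma weyl_conj_isHermitian (i : Fin n) (p q : Fin d) {X : Mat d n} (hX : X.IsHermitian) :
    (weyl i p q * X * star (weyl i p q)).IsHermitian := by
  unfold Matrix.IsHermitian
  rw [Matrix.conjTranspose_mul, Matrix.conjTranspose_mul, Matrix.star_eq_conjTranspose,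
    Matrix.conjTranspose_conjTranspose, hX.eq, Matrix.mul_assoc]

/-- Fully depolarizing channel on the `i`-th qudit (tensored with identity). -/
def depol (i : Fin n) (X : Mat d n) : Mat d n :=
  fun a b => if a i = b i then
    (d : ℂ)⁻¹ * ∑ s, X (Function.update a i s) (Function.update b i s) else 0

lemma twirl (i : Fin n) (X : Mat d n) :
    ∑ p : Fin d, ∑ q : Fin d, weyl i p q * X * star (weyl i p q) =
      ((d : ℂ) ^ 2) • depol i X := by
  funext a b
  rw [Matrix.smul_apply, Matrix.sum_apply]
  simp_rw [Matrix.sum_apply, weyl_conj_apply]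
  have hinner : ∀ p : Fin d,
      ∑ q : Fin d, chi d (q * (a i - p)) * star (chi d (q * (b i - p))) *
        X (Function.update a i (a i - p)) (Function.update b i (b i - p)) =
      (if a i = b i then (d : ℂ) else 0) *
        X (Function.update a i (a i - p)) (Function.update b i (b i - p)) := by
    intro p
    rw [← Finset.sum_mul]
    congr 1
    have hq : ∀ q : Fin d, chi d (q * (a i - p)) * star (chi d (q * (b i - p))) =
        chi d (q * (a i - b i)) := by
      intro q
      rw [star_chi, ← chi_add]
      congr 1
      open Fin.CommRing in ring
    rw [Finset.sum_congr rfl fun q _ => hq q, sum_chi]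
    by_cases h : a i = b i
    · rw [if_pos (show a i - b i = 0 by rw [h, sub_self]), if_pos h]
    · rw [if_neg (fun hc => h (sub_eq_zero.mp hc)), if_neg h]
  rw [Finset.sum_congr rfl fun p _ => hinner p]
  simp only [depol]
  by_cases hab : a i = b i
  · rw [if_pos hab, ← hab]
    rw [if_pos rfl]
    have hre : ∑ p : Fin d,
        (d : ℂ) * X (Function.update a i (a i - p)) (Function.update b i (a i - p)) =
        (d : ℂ) * ∑ s : Fin d, X (Function.update a i s) (Function.update b i s) := by
      rw [Finset.mul_sum]
      exact Equiv.sum_comp (Equiv.subLeft (a i))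
        (fun s => (d : ℂ) * X (Function.update a i s) (Function.update b i s))
    rw [hre, smul_eq_mul]
    have hd : (d : ℂ) ≠ 0 := d_ne_zero
    field_simp
  · rw [if_neg hab]
    simp only [if_neg hab, zero_mul, Finset.sum_const_zero, smul_zero]

variable {d n : ℕ} [NeZero d]

/-- The depolarizing channel at site `i`, as an average over Weyl conjugations. -/
def Qch (i : Fin n) (X : Mat d n) : Mat d n :=
  (((d : ℂ) ^ 2)⁻¹) • ∑ p : Fin d, ∑ q : Fin d, weyl i p q * X * star (weyl i p q)

lemma Qch_eq_depol (i : Fin n) (X : Mat d n) : Qch i X = depol i X := by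
  rw [Qch, twirl, smul_smul, inv_mul_cancel₀ (pow_ne_zero 2 (d_ne_zero (d := d))), one_smul]

lemma isHermitian_real_smul {ι : Type} [Fintype ι] (r : ℝ) {A : Matrix ι ι ℂ}
    (hA : A.IsHermitian) : (((r : ℝ) : ℂ) • A).IsHermitian := by
  unfold Matrix.IsHermitian
  rw [Matrix.conjTranspose_smul, hA.eq]
  congr 1
  simp [Complex.conj_ofReal]

lemma depol_isHermitian (i : Fin n) {X : Mat d n} (hX : X.IsHermitian) :
    (depol i X).IsHermitian := by
  unfold Matrix.IsHermitian
  funext a b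
  rw [Matrix.conjTranspose_apply, depol, depol]
  by_cases h : a i = b i
  · rw [if_pos h.symm, if_pos h]
    rw [star_mul']
    congr 1
    · show star (((d : ℕ) : ℂ)⁻¹) = _
      rw [star_inv₀]
      congr 1
      exact star_natCast d
    · show star ((∑ s : Fin d, X (Function.update b i s) (Function.update a i s))) = _
      rw [star_sum]
      apply Finset.sum_congr rfl
      intro s _
      have := congrFun (congrFun hX.eq (Function.update a i s)) (Function.update b i s)
      rw [Matrix.conjTranspose_apply] at this
      exact this
  · rw [if_neg (fun hc => h hc.symm), if_neg h, star_zero]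

lemma Qch_isHermitian (i : Fin n) {X : Mat d n} (hX : X.IsHermitian) :
    (Qch i X).IsHermitian := by
  rw [Qch_eq_depol]; exact depol_isHermitian i hX

lemma weyl_zero_zero (i : Fin n) : (weyl i 0 0 : Mat d n) = 1 := by
  funext a b
  rw [weyl]
  by_cases h : a = b
  · subst h
    rw [if_pos, Matrix.one_apply_eq, zero_mul, chi_zero]
    rw [add_zero, Function.update_eq_self]
  · rw [if_neg, Matrix.one_apply_ne h]
    rw [add_zero, Function.update_eq_self]
    exact h

lemma traceNorm_Qch_le (i : Fin n) {X : Mat d n} (hX : X.IsHermitian) :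
    traceNorm (Qch i X) ≤ traceNorm X := by
  have hcast : (((d : ℂ) ^ 2)⁻¹) = (((((d:ℝ)^2)⁻¹ : ℝ)) : ℂ) := by push_cast; ring
  have hsum : ∑ p : Fin d, ∑ q : Fin d, weyl i p q * X * star (weyl i p q) =
      ∑ pq : Fin d × Fin d, weyl i pq.1 pq.2 * X * star (weyl i pq.1 pq.2) :=
    (Fintype.sum_prod_type
      (fun pq : Fin d × Fin d => weyl i pq.1 pq.2 * X * star (weyl i pq.1 pq.2))).symm
  rw [Qch, hcast, hsum, traceNorm_real_smul _ (by positivity)]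
  have hbound : traceNorm (∑ pq : Fin d × Fin d, weyl i pq.1 pq.2 * X * star (weyl i pq.1 pq.2))
      ≤ ∑ pq : Fin d × Fin d, traceNorm (weyl i pq.1 pq.2 * X * star (weyl i pq.1 pq.2)) :=
    traceNorm_sum_le _ _ (fun pq _ => weyl_conj_isHermitian i pq.1 pq.2 hX)
  have heach : ∀ pq : Fin d × Fin d,
      traceNorm (weyl i pq.1 pq.2 * X * star (weyl i pq.1 pq.2)) = traceNorm X :=
    fun pq => traceNorm_unitary_conj X (weyl_unitary i pq.1 pq.2)
  calc ((d:ℝ)^2)⁻¹ * traceNorm (∑ pq : Fin d × Fin d, weyl i pq.1 pq.2 * X * star (weyl i pq.1 pq.2))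
      ≤ ((d:ℝ)^2)⁻¹ * ∑ pq : Fin d × Fin d, traceNorm X := by
        refine mul_le_mul_of_nonneg_left ?_ (by positivity)
        exact hbound.trans_eq (Finset.sum_congr rfl fun pq _ => heach pq)
    _ = ((d:ℝ)^2)⁻¹ * ((d:ℝ)^2 * traceNorm X) := by
        rw [Finset.sum_const, Finset.card_univ, Fintype.card_prod, Fintype.card_fin,
          nsmul_eq_mul]
        push_cast
        ring
    _ = traceNorm X := by
        have hd : ((d:ℝ)) ≠ 0 := Nat.cast_ne_zero.mpr (NeZero.ne d)
        rw [← mul_assoc, inv_mul_cancel₀ (by positivity), one_mul]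

lemma sub_Qch_eq_sum (i : Fin n) (X : Mat d n) :
    X - Qch i X = ∑ pq : Fin d × Fin d,
      ((((d:ℝ)^2)⁻¹ : ℝ) : ℂ) • (X - weyl i pq.1 pq.2 * X * star (weyl i pq.1 pq.2)) := by
  have hcast : ((((d:ℝ)^2)⁻¹ : ℝ) : ℂ) = (((d : ℂ) ^ 2)⁻¹) := by push_cast; ring
  rw [← Finset.smul_sum, Finset.sum_sub_distrib, Finset.sum_const, Finset.card_univ,
    Fintype.card_prod, Fintype.card_fin, hcast, smul_sub, Qch]
  congr 1
  · rw [← Nat.cast_smul_eq_nsmul ℂ (d * d) X, smul_smul]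
    have h1 : ((d:ℂ)^2)⁻¹ * ((d * d : ℕ) : ℂ) = 1 := by
      push_cast
      rw [sq]
      exact inv_mul_cancel₀ (mul_ne_zero (d_ne_zero (d := d)) (d_ne_zero (d := d)))
    rw [h1, one_smul]
  · congr 1
    exact (Fintype.sum_prod_type
      (fun pq : Fin d × Fin d => weyl i pq.1 pq.2 * X * star (weyl i pq.1 pq.2))).symm

lemma traceNorm_sub_Qch_le (i : Fin n) {X : Mat d n} (hX : X.IsHermitian) :
    traceNorm (X - Qch i X) ≤ 2 * (((d:ℝ)^2 - 1) / (d:ℝ)^2) * traceNorm X := by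
  have hd : ((d:ℝ)) ≠ 0 := Nat.cast_ne_zero.mpr (NeZero.ne d)
  set c : ℝ := ((d:ℝ)^2)⁻¹ with hc
  set c2 : ℝ := c * (2 * traceNorm X) with hc2
  have hc2nn : 0 ≤ c2 := by
    have := traceNorm_nonneg X
    positivity
  set f : Fin d × Fin d → Mat d n := fun pq =>
    ((c : ℝ) : ℂ) • (X - weyl i pq.1 pq.2 * X * star (weyl i pq.1 pq.2)) with hf
  have hterm : ∀ pq ∈ Finset.univ, (f pq).IsHermitian := fun pq _ =>
    isHermitian_real_smul c (hX.sub (weyl_conj_isHermitian i pq.1 pq.2 hX))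
  have h1 : traceNorm (X - Qch i X) ≤ ∑ pq : Fin d × Fin d, traceNorm (f pq) := by
    rw [sub_Qch_eq_sum]
    exact traceNorm_sum_le _ _ hterm
  have h2 : ∀ pq : Fin d × Fin d, traceNorm (f pq) ≤
      (if pq = (0, 0) then 0 else c2) := by
    intro pq
    by_cases hpq : pq = (0, 0)
    · rw [if_pos hpq, hf]
      subst hpq
      have hz : (X - weyl i (0:Fin d) (0:Fin d) * X * star (weyl i (0:Fin d) (0:Fin d))) = 0 := by
        rw [weyl_zero_zero, star_one, one_mul, mul_one, sub_self]
      simp only [hz, smul_zero]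
      rw [traceNorm_zero]
    · rw [if_neg hpq, hf]
      have hnn : (0:ℝ) ≤ c := by positivity
      simp only []
      rw [traceNorm_real_smul c hnn, hc2]
      refine mul_le_mul_of_nonneg_left ?_ hnn
      calc traceNorm (X - weyl i pq.1 pq.2 * X * star (weyl i pq.1 pq.2))
          ≤ traceNorm X + traceNorm (weyl i pq.1 pq.2 * X * star (weyl i pq.1 pq.2)) :=
            traceNorm_sub_le hX (weyl_conj_isHermitian i pq.1 pq.2 hX)
        _ = 2 * traceNorm X := by
            rw [traceNorm_unitary_conj X (weyl_unitary i pq.1 pq.2)]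
            ring
  have h3 : ∑ pq : Fin d × Fin d, traceNorm (f pq) ≤
      ∑ pq : Fin d × Fin d, (if pq = (0,0) then 0 else c2) :=
    Finset.sum_le_sum fun pq _ => h2 pq
  have h4 : ∑ pq : Fin d × Fin d, (if pq = (0,0) then 0 else c2) =
      ((d:ℝ)^2 - 1) * c2 := by
    have hsplit : ∀ pq : Fin d × Fin d, (if pq = (0,0) then (0:ℝ) else c2) =
        c2 - (if pq = (0,0) then c2 else 0) := by
      intro pq
      split_ifs <;> simp
    rw [Finset.sum_congr rfl fun pq _ => hsplit pq, Finset.sum_sub_distrib,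
      Finset.sum_const, Finset.card_univ, Fintype.card_prod, Fintype.card_fin,
      Finset.sum_ite_eq' Finset.univ ((0,0) : Fin d × Fin d) (fun _ => c2),
      if_pos (Finset.mem_univ _), nsmul_eq_mul]
    push_cast
    ring
  calc traceNorm (X - Qch i X) ≤ ∑ pq : Fin d × Fin d, (if pq = (0,0) then 0 else c2) :=
        h1.trans h3
    _ = ((d:ℝ)^2 - 1) * c2 := h4
    _ = 2 * (((d:ℝ)^2 - 1) / (d:ℝ)^2) * traceNorm X := by
        rw [hc2, hc]
        field_simp

lemma ins_self (i : Fin n) (a' : {j : Fin n // j ≠ i} → Fin d) (s : Fin d) :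
    ins i a' s i = s := dif_pos rfl

lemma update_ins (i : Fin n) (a' : {j : Fin n // j ≠ i} → Fin d) (s t : Fin d) :
    Function.update (ins i a' s) i t = ins i a' t := by
  funext j
  by_cases hj : j = i
  · subst hj
    rw [Function.update_self]
    show _ = ins j a' t j
    rw [ins, dif_pos rfl]
  · rw [Function.update_of_ne hj]
    show ins i a' s j = ins i a' t j
    rw [ins, ins]
    rw [dif_neg hj, dif_neg hj]

lemma ptrace_depol (i : Fin n) (X : Mat d n) : ptrace i (depol i X) = ptrace i X := by
  funext a' b'
  show ∑ s : Fin d, depol i X (ins i a' s) (ins i b' s) = _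
  have h : ∀ s : Fin d, depol i X (ins i a' s) (ins i b' s) =
      (d:ℂ)⁻¹ * ∑ t : Fin d, X (ins i a' t) (ins i b' t) := by
    intro s
    rw [depol, if_pos (by rw [ins_self, ins_self])]
    congr 1
    refine Finset.sum_congr rfl fun t _ => ?_
    rw [update_ins, update_ins]
  rw [Finset.sum_congr rfl fun s _ => h s, Finset.sum_const, Finset.card_univ,
    Fintype.card_fin, nsmul_eq_mul, ← mul_assoc, mul_inv_cancel₀ (d_ne_zero (d := d)), one_mul]
  rfl

lemma ptrace_sub (i : Fin n) (X Y : Mat d n) :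
    ptrace i (X - Y) = ptrace i X - ptrace i Y := by
  funext a' b'
  show ∑ s : Fin d, (X - Y) (ins i a' s) (ins i b' s) = _
  have h2 : ∀ s : Fin d, (X - Y) (ins i a' s) (ins i b' s) =
      X (ins i a' s) (ins i b' s) - Y (ins i a' s) (ins i b' s) := fun s => rfl
  rw [Finset.sum_congr rfl fun s _ => h2 s, Finset.sum_sub_distrib]
  rfl

lemma ptrace_sub_Qch (i : Fin n) (X : Mat d n) : ptrace i (X - Qch i X) = 0 := by
  rw [ptrace_sub, Qch_eq_depol, ptrace_depol, sub_self]

variable {d n : ℕ} [NeZero d]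

/-- Partial depolarization over the set `J`. -/
def Pop (J : Finset (Fin n)) (X : Mat d n) : Mat d n := fun a b =>
  if ∀ j ∈ J, a j = b j then
    ((d : ℂ) ^ J.card)⁻¹ *
      ∑ s : ({j : Fin n // j ∈ J} → Fin d),
        X (insSet J (fun j => a j.1) s) (insSet J (fun j => b j.1) s)
  else 0

lemma Pop_empty (X : Mat d n) : Pop ∅ X = X := by
  funext a b
  rw [Pop, if_pos (fun j hj => absurd hj (Finset.notMem_empty j))]
  rw [Finset.card_empty, pow_zero, inv_one, one_mul]
  haveI : IsEmpty {j : Fin n // j ∈ (∅ : Finset (Fin n))} :=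
    ⟨fun j => Finset.notMem_empty j.1 j.2⟩
  have e1 : ∀ s : ({j : Fin n // j ∈ (∅ : Finset (Fin n))} → Fin d),
      insSet (∅ : Finset (Fin n)) (fun j => a j.1) s = a := by
    intro s; funext j; rw [insSet, dif_neg (Finset.notMem_empty j)]
  have e2 : ∀ s : ({j : Fin n // j ∈ (∅ : Finset (Fin n))} → Fin d),
      insSet (∅ : Finset (Fin n)) (fun j => b j.1) s = b := by
    intro s; funext j; rw [insSet, dif_neg (Finset.notMem_empty j)]
  rw [Finset.sum_congr rfl (fun s _ => by rw [e1 s, e2 s])]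
  rw [Finset.sum_const, Finset.card_univ, Fintype.card_unique, one_nsmul]

lemma Pop_eq_zero {I : Finset (Fin n)} {X : Mat d n} (hI : ptraceSet I X = 0) :
    Pop I X = 0 := by
  funext a b
  rw [Pop]
  split_ifs with h
  · have hs : ∑ s : ({j : Fin n // j ∈ I} → Fin d),
        X (insSet I (fun j => a j.1) s) (insSet I (fun j => b j.1) s)
        = ptraceSet I X (fun j => a j.1) (fun j => b j.1) := rfl
    rw [hs, hI]
    simp
  · rfl

/-- Extend an assignment on `J` by a value at `i`. -/
def extendFun (i : Fin n) (J : Finset (Fin n)) (s : Fin d)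
    (t : {j : Fin n // j ∈ J} → Fin d) : {j : Fin n // j ∈ insert i J} → Fin d :=
  fun j => if h : j.1 = i then s else t ⟨j.1, (Finset.mem_insert.mp j.2).resolve_left h⟩

lemma insSet_insert (i : Fin n) (J : Finset (Fin n)) (hiJ : i ∉ J) (a : Cfg d n)
    (s : Fin d) (t : {j : Fin n // j ∈ J} → Fin d) :
    insSet (insert i J) (fun j => a j.1) (extendFun i J s t) =
    insSet J (fun j => (Function.update a i s) j.1) t := by
  funext j
  rw [insSet, insSet]
  by_cases hji : j = i
  · subst hji
    rw [dif_pos (Finset.mem_insert_self j J), dif_neg hiJ]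
    rw [extendFun]
    rw [dif_pos rfl, Function.update_self]
  · by_cases hjJ : j ∈ J
    · rw [dif_pos (Finset.mem_insert_of_mem hjJ), dif_pos hjJ]
      rw [extendFun]
      rw [dif_neg hji]
    · rw [dif_neg (by simp [hji, hjJ]), dif_neg hjJ, Function.update_of_ne hji]

/-- Assignments on `insert i J` correspond to pairs. -/
def insertEquiv (i : Fin n) (J : Finset (Fin n)) (hiJ : i ∉ J) :
    (Fin d × ({j : Fin n // j ∈ J} → Fin d)) ≃ ({j : Fin n // j ∈ insert i J} → Fin d) where
  toFun st := extendFun i J st.1 st.2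
  invFun f := (f ⟨i, Finset.mem_insert_self i J⟩,
    fun j => f ⟨j.1, Finset.mem_insert_of_mem j.2⟩)
  left_inv st := by
    obtain ⟨s, t⟩ := st
    refine Prod.ext ?_ ?_
    · show extendFun i J s t ⟨i, _⟩ = s
      rw [extendFun]
      rw [dif_pos rfl]
    · funext j
      show extendFun i J s t ⟨j.1, _⟩ = t j
      rw [extendFun]
      rw [dif_neg (show j.1 ≠ i from fun h => hiJ (h ▸ j.2))]
  right_inv f := by
    funext j
    show extendFun i J _ _ j = f j
    rw [extendFun]
    by_cases h : j.1 = i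
    · rw [dif_pos h]
      exact congrArg f (Subtype.ext h.symm)
    · rw [dif_neg h]

lemma Q_Pop (i : Fin n) (J : Finset (Fin n)) (hiJ : i ∉ J) (X : Mat d n) :
    Qch i (Pop J X) = Pop (insert i J) X := by
  rw [Qch_eq_depol]
  funext a b
  rw [depol]
  show _ = Pop (insert i J) X a b
  rw [Pop]
  by_cases hab : ∀ j ∈ insert i J, a j = b j
  · have hai : a i = b i := hab i (Finset.mem_insert_self i J)
    have hJ : ∀ j ∈ J, a j = b j := fun j hj => hab j (Finset.mem_insert_of_mem hj)
    rw [if_pos hai, if_pos hab]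
    have hterm : ∀ s : Fin d, Pop J X (Function.update a i s) (Function.update b i s)
        = ((d:ℂ) ^ J.card)⁻¹ * ∑ t : ({j : Fin n // j ∈ J} → Fin d),
            X (insSet J (fun j => (Function.update a i s) j.1) t)
              (insSet J (fun j => (Function.update b i s) j.1) t) := by
      intro s
      rw [Pop, if_pos]
      intro j hj
      have hji : j ≠ i := fun h => hiJ (h ▸ hj)
      rw [Function.update_of_ne hji, Function.update_of_ne hji]
      exact hJ j hj
    rw [Finset.sum_congr rfl (fun s _ => hterm s), ← Finset.mul_sum]
    have hbig : ∑ u : ({j : Fin n // j ∈ insert i J} → Fin d),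
        X (insSet (insert i J) (fun j => a j.1) u) (insSet (insert i J) (fun j => b j.1) u)
        = ∑ s : Fin d, ∑ t : ({j : Fin n // j ∈ J} → Fin d),
            X (insSet J (fun j => (Function.update a i s) j.1) t)
              (insSet J (fun j => (Function.update b i s) j.1) t) := by
      rw [← Equiv.sum_comp (insertEquiv i J hiJ)
        (fun u => X (insSet (insert i J) (fun j => a j.1) u)
          (insSet (insert i J) (fun j => b j.1) u))]
      rw [← Fintype.sum_prod_type
        (fun st : Fin d × ({j : Fin n // j ∈ J} → Fin d) =>
          X (insSet J (fun j => (Function.update a i st.1) j.1) st.2)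
            (insSet J (fun j => (Function.update b i st.1) j.1) st.2))]
      refine Finset.sum_congr rfl fun st _ => ?_
      have h1 := insSet_insert i J hiJ a st.1 st.2
      have h2 := insSet_insert i J hiJ b st.1 st.2
      show X (insSet (insert i J) (fun j => a j.1) (extendFun i J st.1 st.2))
          (insSet (insert i J) (fun j => b j.1) (extendFun i J st.1 st.2))
        = X (insSet J (fun j => (Function.update a i st.1) j.1) st.2)
            (insSet J (fun j => (Function.update b i st.1) j.1) st.2)
      rw [h1, h2]
    rw [hbig, Finset.card_insert_of_notMem hiJ, pow_succ, mul_inv]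
    ring
  · rw [if_neg hab]
    by_cases hai : a i = b i
    · rw [if_pos hai]
      have hzero : ∀ s : Fin d, Pop J X (Function.update a i s) (Function.update b i s) = 0 := by
        intro s
        rw [Pop, if_neg]
        intro hcon
        apply hab
        intro j hj
        rcases Finset.mem_insert.mp hj with hji | hjJ
        · subst hji; exact hai
        · have hji : j ≠ i := fun h => hiJ (h ▸ hjJ)
          have := hcon j hjJ
          rw [Function.update_of_ne hji, Function.update_of_ne hji] at this
          exact this
      rw [Finset.sum_congr rfl (fun s _ => hzero s), Finset.sum_const_zero, mul_zero]
    · rw [if_neg hai]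

variable {d n : ℕ} [NeZero d]

lemma Pop_herm_tn (X : Mat d n) (hX : X.IsHermitian) (J : Finset (Fin n)) :
    (Pop J X).IsHermitian ∧ traceNorm (Pop J X) ≤ traceNorm X := by
  induction J using Finset.induction_on with
  | empty => rw [Pop_empty]; exact ⟨hX, le_refl _⟩
  | insert a s' hx ih =>
    rw [← Q_Pop a s' hx]
    exact ⟨Qch_isHermitian a ih.1, (traceNorm_Qch_le a ih.1).trans ih.2⟩

lemma tele (X : Mat d n) (I : Finset (Fin n)) :
    ∑ i ∈ I, (Pop (I.filter (· < i)) X - Pop (I.filter (· ≤ i)) X) = X - Pop I X := by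
  induction I using Finset.induction_on_max with
  | empty => simp [Pop_empty]
  | insert M s hs ih =>
    have hMs : M ∉ s := fun h => absurd (hs M h) (lt_irrefl M)
    have hflt : ∀ i ∈ s, (insert M s).filter (· < i) = s.filter (· < i) := by
      intro i hi
      apply Finset.ext
      intro x
      simp only [Finset.mem_filter, Finset.mem_insert]
      constructor
      · rintro ⟨hx | hx, hxi⟩
        · exact absurd (hxi.trans (hs i hi)) (by rw [hx]; exact lt_irrefl M)
        · exact ⟨hx, hxi⟩
      · rintro ⟨hx, hxi⟩
        exact ⟨Or.inr hx, hxi⟩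
    have hfle : ∀ i ∈ s, (insert M s).filter (· ≤ i) = s.filter (· ≤ i) := by
      intro i hi
      apply Finset.ext
      intro x
      simp only [Finset.mem_filter, Finset.mem_insert]
      constructor
      · rintro ⟨hx | hx, hxi⟩
        · exact absurd (hxi.trans_lt (hs i hi)) (by rw [hx]; exact lt_irrefl M)
        · exact ⟨hx, hxi⟩
      · rintro ⟨hx, hxi⟩
        exact ⟨Or.inr hx, hxi⟩
    have hMlt : (insert M s).filter (· < M) = s := by
      apply Finset.ext
      intro x
      simp only [Finset.mem_filter, Finset.mem_insert]
      constructor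
      · rintro ⟨hx | hx, hxM⟩
        · exact absurd hxM (by rw [hx]; exact lt_irrefl M)
        · exact hx
      · intro hx
        exact ⟨Or.inr hx, hs x hx⟩
    have hMle : (insert M s).filter (· ≤ M) = insert M s := by
      apply Finset.filter_true_of_mem
      intro x hx
      rcases Finset.mem_insert.mp hx with h | h
      · exact le_of_eq h
      · exact (hs x h).le
    rw [Finset.sum_insert hMs, hMlt, hMle]
    rw [Finset.sum_congr rfl (fun i hi => by rw [hflt i hi, hfle i hi]), ih]
    abel

lemma ptrace_zero (i : Fin n) : ptrace i (0 : Mat d n) = 0 := by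
  funext a' b'
  show ∑ s : Fin d, (0 : Mat d n) (ins i a' s) (ins i b' s) = _
  simp

lemma ptraceSet_sub (I : Finset (Fin n)) (X Y : Mat d n) :
    ptraceSet I (X - Y) = ptraceSet I X - ptraceSet I Y := by
  funext a' b'
  show ∑ s, (X - Y) (insSet I a' s) (insSet I b' s) = _
  have h2 : ∀ s, (X - Y) (insSet I a' s) (insSet I b' s) =
      X (insSet I a' s) (insSet I b' s) - Y (insSet I a' s) (insSet I b' s) := fun s => rfl
  rw [Finset.sum_congr rfl fun s _ => h2 s, Finset.sum_sub_distrib]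
  rfl

lemma main_bound {X : Mat d n} (I : Finset (Fin n)) (hX : X.IsHermitian)
    (hI : ptraceSet I X = 0) :
    W1 X ≤ (I.card : ℝ) * (((d : ℝ) ^ 2 - 1) / (d : ℝ) ^ 2) * traceNorm X := by
  set c : ℝ := ((d : ℝ) ^ 2 - 1) / (d : ℝ) ^ 2 with hc
  have hd : ((d:ℝ)) ≠ 0 := Nat.cast_ne_zero.mpr (NeZero.ne d)
  have hd1 : (1:ℝ) ≤ (d:ℝ)^2 := by
    have : (1:ℕ) ≤ d := Nat.one_le_iff_ne_zero.mpr (NeZero.ne d)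
    have h1 : (1:ℝ) ≤ (d:ℝ) := by exact_mod_cast this
    nlinarith
  have hcnn : 0 ≤ c := by
    rw [hc]
    apply div_nonneg (by linarith) (by positivity)
  set f : Fin n → Mat d n := fun i => Pop (I.filter (· < i)) X - Pop (I.filter (· ≤ i)) X
    with hfdef
  set Y : Fin n → Mat d n := fun i => if i ∈ I then f i else 0 with hYdef
  have hfilter_eq : ∀ i ∈ I, I.filter (· ≤ i) = insert i (I.filter (· < i)) := by
    intro i hi
    apply Finset.ext
    intro x
    simp only [Finset.mem_filter, Finset.mem_insert]
    constructor
    · rintro ⟨hx, hxi⟩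
      rcases eq_or_lt_of_le hxi with h | h
      · exact Or.inl h
      · exact Or.inr ⟨hx, h⟩
    · rintro (h | ⟨hx, hxi⟩)
      · subst h; exact ⟨hi, le_refl x⟩
      · exact ⟨hx, hxi.le⟩
  have hiflt : ∀ i : Fin n, i ∉ I.filter (· < i) := by
    intro i h
    exact absurd (Finset.mem_filter.mp h).2 (lt_irrefl i)
  have hf_eq : ∀ i ∈ I, f i =
      Pop (I.filter (· < i)) X - Qch i (Pop (I.filter (· < i)) X) := by
    intro i hi
    rw [hfdef]
    simp only []
    rw [hfilter_eq i hi, ← Q_Pop i _ (hiflt i)]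
  have hherm : ∀ i, (Y i).IsHermitian := by
    intro i
    rw [hYdef]
    by_cases hi : i ∈ I
    · simp only [if_pos hi]
      exact ((Pop_herm_tn X hX _).1).sub (Pop_herm_tn X hX _).1
    · simp only [if_neg hi]
      exact Matrix.isHermitian_zero
  have hptr : ∀ i, ptrace i (Y i) = 0 := by
    intro i
    rw [hYdef]
    by_cases hi : i ∈ I
    · simp only [if_pos hi]
      rw [hf_eq i hi]
      exact ptrace_sub_Qch i _
    · simp only [if_neg hi]
      exact ptrace_zero i
  have hsum : X = ∑ i, Y i := by
    have h1 : ∑ i, Y i = ∑ i ∈ I, f i := by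
      rw [hYdef]
      rw [Finset.sum_ite_mem Finset.univ I f, Finset.univ_inter]
    rw [h1, hfdef]
    simp only []
    rw [tele X I, Pop_eq_zero hI, sub_zero]
  have hbound : ∀ i, traceNorm (Y i) ≤ (if i ∈ I then 2 * c * traceNorm X else 0) := by
    intro i
    rw [hYdef]
    by_cases hi : i ∈ I
    · simp only [if_pos hi]
      rw [hf_eq i hi]
      calc traceNorm (Pop (I.filter (· < i)) X - Qch i (Pop (I.filter (· < i)) X))
          ≤ 2 * c * traceNorm (Pop (I.filter (· < i)) X) :=
            traceNorm_sub_Qch_le i (Pop_herm_tn X hX _).1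
        _ ≤ 2 * c * traceNorm X := by
            refine mul_le_mul_of_nonneg_left (Pop_herm_tn X hX _).2 (by positivity)
    · simp only [if_neg hi]
      rw [traceNorm_zero]
  have hmem : (1 / 2) * ∑ i, traceNorm (Y i) ∈ W1Set X :=
    ⟨Y, hherm, hptr, hsum, rfl⟩
  have hW1le : W1 X ≤ (1 / 2) * ∑ i, traceNorm (Y i) := by
    apply csInf_le
    · refine ⟨0, fun r hr => ?_⟩
      obtain ⟨Z, _, _, _, hr⟩ := hr
      rw [hr]
      have : 0 ≤ ∑ i, traceNorm (Z i) :=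
        Finset.sum_nonneg fun i _ => traceNorm_nonneg (Z i)
      linarith
    · exact hmem
  refine hW1le.trans ?_
  calc (1 / 2) * ∑ i, traceNorm (Y i)
      ≤ (1 / 2) * ∑ i, (if i ∈ I then 2 * c * traceNorm X else 0) := by
        have := Finset.sum_le_sum (fun i (_ : i ∈ Finset.univ) => hbound i)
        linarith
    _ = (1 / 2) * (I.card * (2 * c * traceNorm X)) := by
        rw [Finset.sum_ite_mem Finset.univ I (fun _ => 2 * c * traceNorm X),
          Finset.univ_inter, Finset.sum_const, nsmul_eq_mul]
    _ = (I.card : ℝ) * c * traceNorm X := by ring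

end Aux

theorem stmt4 {d n : ℕ} (hd : 2 ≤ d) (hn : 1 ≤ n) (I : Finset (Fin n))
    (X : Mat d n) (hX : X.IsHermitian) (hXtr : X.trace = 0)
    (hI : ptraceSet I X = 0) :
    W1 X ≤ (I.card : ℝ) * (((d : ℝ) ^ 2 - 1) / (d : ℝ) ^ 2) * traceNorm X ∧
    ∀ ρ σ : Mat d n, IsState ρ → IsState σ → ptraceSet I ρ = ptraceSet I σ →
      W1 (ρ - σ) ≤ (I.card : ℝ) * (((d : ℝ) ^ 2 - 1) / (d : ℝ) ^ 2) * traceNorm (ρ - σ) := by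
  haveI : NeZero d := ⟨by omega⟩
  constructor
  · exact main_bound I hX hI
  · intro ρ σ hρ σh hps
    have hH : (ρ - σ).IsHermitian := hρ.1.1.sub σh.1.1
    have h0 : ptraceSet I (ρ - σ) = 0 := by
      rw [ptraceSet_sub, hps, sub_self]
    exact main_bound I hH h0

end QW1
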